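/- With the hypotheses above, for any affine point P = (x, y) on y² = x³ + t^q − t over F(t), writing x = f/g with f, g ∈ F[t] coprime, one has deg(f) ≥ deg(g) + (q+1)/3; in particular the naive height h(P) := max(deg f, deg g) equals deg(f) and satisfies h(P) ≥ (q+1)/3. -/

import Mathlib

open Polynomial

/-- With the hypotheses of Statement 0, for any affine point `(x, y)` on
`y² = x³ + t^q − t` with `x = f/g`, `f, g` coprime, one has `deg f ≥ deg g + (q+1)/3`
(stated multiplied through by 3), the naive height `max(deg f, deg g)` equals `deg f`,
and the naive height is at least `(q+1)/3`. -/
theorem naive_height_lower_bound (p c q : ℕ) [Fact p.Prime] (hp3 : 3 < p) (hp6 : p % 6 = 5)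
    (hc : Odd c) (hq : q = p ^ c)
    (F : Type*) [Field F] [CharP F p] (φ : GaloisField p c →+* F)
    (f g : Polynomial F) (hg : g ≠ 0) (hfg : IsCoprime f g)
    (x y : RatFunc F)
    (hx : x = algebraMap (Polynomial F) (RatFunc F) f / algebraMap (Polynomial F) (RatFunc F) g)
    (hxy : y ^ 2 = x ^ 3 + (RatFunc.X ^ q - RatFunc.X)) :
    3 * g.natDegree + (q + 1) ≤ 3 * f.natDegree ∧
      max f.natDegree g.natDegree = f.natDegree ∧
      q + 1 ≤ 3 * max f.natDegree g.natDegree := by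
  have hp := (Fact.out : p.Prime)
  -- q is odd and not divisible by 3
  have hqodd : Odd q := hq ▸ (hp.odd_of_ne_two (by omega)).pow
  have hq3 : ¬ (3 ∣ q) := by
    rw [hq]
    intro h
    have h3 : (3:ℕ).Prime := by norm_num
    have hdp : 3 ∣ p := Nat.Prime.dvd_of_dvd_pow h3 h
    rcases (Nat.Prime.eq_one_or_self_of_dvd hp 3 hdp) with h' | h' <;> omega
  have hq2 : 2 ≤ q := by
    rcases hc with ⟨k, hk⟩
    have : p ≤ p ^ c := Nat.le_self_pow (by omega) p
    omega
  set A := algebraMap (Polynomial F) (RatFunc F) with hA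
  set N : Polynomial F := f ^ 3 + (X ^ q - X) * g ^ 3 with hN
  set u := y.num with hu
  set v := y.denom with hv
  have hvne : v ≠ 0 := y.denom_ne_zero
  have hy : A u / A v = y := y.num_div_denom
  have hgA : A g ≠ 0 := RatFunc.algebraMap_ne_zero hg
  have hvA : A v ≠ 0 := RatFunc.algebraMap_ne_zero hvne
  -- master polynomial equation
  have key : u ^ 2 * g ^ 3 = N * v ^ 2 := by
    apply RatFunc.algebraMap_injective F
    rw [hx, ← hy] at hxy
    have hXq : RatFunc.X ^ q - RatFunc.X = A (X ^ q - X) := by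
      rw [map_sub, map_pow, RatFunc.algebraMap_X]
    rw [hXq] at hxy
    push_cast [map_mul, map_pow, map_add, map_sub]
    field_simp at hxy
    rw [hN]
    push_cast [map_mul, map_pow, map_add, map_sub]
    rw [map_sub, map_pow] at hxy
    linear_combination hxy
  -- coprimality
  have hNg : IsCoprime N g := by
    have h1 : IsCoprime (f ^ 3) g := hfg.pow_left
    have h2 := h1.add_mul_left_left ((X ^ q - X) * g ^ 2)
    have : f ^ 3 + g * ((X ^ q - X) * g ^ 2) = N := by rw [hN]; ring
    rwa [this] at h2
  have huv : IsCoprime v u := (RatFunc.isCoprime_num_denom y).symm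
  -- v^2 and g^3 divide each other
  have hvg : (v ^ 2 : Polynomial F) ∣ g ^ 3 := by
    have hdvd : v ^ 2 ∣ u ^ 2 * g ^ 3 := key ▸ Dvd.intro_left N rfl
    exact ((huv.pow (m := 2) (n := 2)).dvd_of_dvd_mul_left hdvd)
  have hgv : (g ^ 3 : Polynomial F) ∣ v ^ 2 := by
    have hdvd : g ^ 3 ∣ N * v ^ 2 := key ▸ Dvd.intro_left _ rfl
    exact (((hNg.symm.pow_left : IsCoprime (g ^ 3) N)).dvd_of_dvd_mul_left hdvd)
  have hdeg_vg : 2 * v.natDegree = 3 * g.natDegree := by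
    have h1 := Polynomial.natDegree_le_of_dvd hvg (pow_ne_zero _ hg)
    have h2 := Polynomial.natDegree_le_of_dvd hgv (pow_ne_zero _ hvne)
    rw [Polynomial.natDegree_pow, Polynomial.natDegree_pow] at h1 h2
    omega
  -- N ≠ 0
  have hXqX : (X ^ q - X : Polynomial F).natDegree = q := by
    have hlt : (X : Polynomial F).natDegree < (X ^ q : Polynomial F).natDegree := by
      simp only [natDegree_X, natDegree_X_pow]; omega
    rw [Polynomial.natDegree_sub_eq_left_of_natDegree_lt hlt, natDegree_X_pow]
  have hXqXne : (X ^ q - X : Polynomial F) ≠ 0 := by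
    intro h
    rw [h] at hXqX
    simp at hXqX
    omega
  have hNne : N ≠ 0 := by
    intro h0
    have hfne : f ≠ 0 := by
      intro hf
      rw [hN, hf] at h0
      simp at h0
      rcases h0 with h0 | h0
      · exact hXqXne h0
      · exact hg h0
    have : (f ^ 3 : Polynomial F) = -((X ^ q - X) * g ^ 3) := by
      rw [hN] at h0; linear_combination h0
    have hdeq : (f ^ 3 : Polynomial F).natDegree = ((X ^ q - X) * g ^ 3).natDegree := by
      rw [this, natDegree_neg]
    rw [Polynomial.natDegree_pow, Polynomial.natDegree_mul hXqXne (pow_ne_zero _ hg),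
      Polynomial.natDegree_pow, hXqX] at hdeq
    exact hq3 ⟨f.natDegree - g.natDegree, by omega⟩
  have hune : u ≠ 0 := by
    intro h0
    rw [h0] at key
    simp at key
    rcases key with h | h
    · exact hNne h
    · exact hvne h
  -- degree equation from key
  have hdeg_key : 2 * u.natDegree + 3 * g.natDegree = N.natDegree + 2 * v.natDegree := by
    have := congrArg Polynomial.natDegree key
    rw [Polynomial.natDegree_mul (pow_ne_zero _ hune) (pow_ne_zero _ hg),
      Polynomial.natDegree_mul hNne (pow_ne_zero _ hvne)] at this
    simp only [Polynomial.natDegree_pow] at this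
    omega
  -- main inequality
  have main : 3 * g.natDegree + (q + 1) ≤ 3 * f.natDegree := by
    by_contra hcon
    push_neg at hcon
    have hne3 : 3 * f.natDegree ≠ q + 3 * g.natDegree := by
      intro h
      exact hq3 ⟨f.natDegree - g.natDegree, by omega⟩
    have hlt : 3 * f.natDegree < q + 3 * g.natDegree := by omega
    have hdegN : N.natDegree = q + 3 * g.natDegree := by
      rw [hN]
      rw [Polynomial.natDegree_add_eq_right_of_natDegree_lt]
      · rw [Polynomial.natDegree_mul hXqXne (pow_ne_zero _ hg),
          Polynomial.natDegree_pow, hXqX]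
      · rw [Polynomial.natDegree_mul hXqXne (pow_ne_zero _ hg),
          Polynomial.natDegree_pow, Polynomial.natDegree_pow, hXqX]
        omega
    rcases hqodd with ⟨m, hm⟩
    omega
  exact ⟨main, by omega, by omega⟩
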